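/- With X = (ω+1) × ω and 𝓣 as above, no expansion (X, 𝓑') with 𝓣 ⊆ 𝓑' that is chain intersection closed can be spherically complete. Specifically, each set N_k = {(ω,ℓ) : k ≤ ℓ < ω} is the intersection of the chain {B_{m,k} : m < ω} ⊆ 𝓣, hence lies in 𝓑', and the chain {N_k : k < ω} in 𝓑' has empty intersection. -/
import Mathlib


/-- The ball `B_{m,k} = {(n,k) : m ≤ n ≤ ω} ∪ {(ω,ℓ) : k ≤ ℓ < ω}` in
`X = (ω+1) × ω`, modelled as `ℕ∞ × ℕ`. -/
def Bmk (m k : ℕ) : Set (ℕ∞ × ℕ) :=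
  {p | (p.2 = k ∧ (m : ℕ∞) ≤ p.1) ∨ (p.1 = ⊤ ∧ k ≤ p.2)}

/-- The family `𝓣`: all balls `B_{m,k}`, all doubletons `{(ω,k),(ω,ℓ)}` with
`k ≠ ℓ`, and `X` itself. -/
def Tfam : Set (Set (ℕ∞ × ℕ)) :=
  {s | ∃ m k : ℕ, s = Bmk m k} ∪
    {s | ∃ k l : ℕ, k ≠ l ∧ s = {((⊤ : ℕ∞), k), ((⊤ : ℕ∞), l)}} ∪
    {Set.univ}

/-- `N_k = {(ω,ℓ) : k ≤ ℓ < ω}`. -/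
def Nk (k : ℕ) : Set (ℕ∞ × ℕ) := {p | p.1 = ⊤ ∧ k ≤ p.2}

lemma inter_Bmk (k : ℕ) : ⋂₀ {s | ∃ m : ℕ, s = Bmk m k} = Nk k := by
  ext p
  simp only [Set.mem_sInter, Set.mem_setOf_eq, Nk]
  constructor
  · intro h
    have h1 : ∀ m : ℕ, p ∈ Bmk m k := fun m => h _ ⟨m, rfl⟩
    by_cases hp : p.1 = ⊤
    · refine ⟨hp, ?_⟩
      rcases h1 0 with h' | h'
      · exact h'.1.ge
      · exact h'.2
    · exfalso
      obtain ⟨n, hn⟩ := WithTop.ne_top_iff_exists.mp hp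
      rcases h1 (n + 1) with h' | h'
      · rw [← hn] at h'
        have := h'.2
        rw [show (WithTop.some n : ℕ∞) = ((n : ℕ) : ℕ∞) from rfl] at this
        norm_cast at this
        omega
      · exact hp h'.1
  · rintro ⟨h1, h2⟩ s ⟨m, rfl⟩
    exact Or.inr ⟨h1, h2⟩

lemma chain_Bmk (k : ℕ) : IsChain (· ⊆ ·) {s | ∃ m : ℕ, s = Bmk m k} := by
  rintro s ⟨m, rfl⟩ t ⟨m', rfl⟩ -
  have key : ∀ a b : ℕ, a ≤ b → Bmk b k ⊆ Bmk a k := by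
    rintro a b hab p (⟨h1, h2⟩ | h)
    · exact Or.inl ⟨h1, le_trans (by exact_mod_cast hab) h2⟩
    · exact Or.inr h
  rcases le_total m m' with h | h
  · exact Or.inr (key _ _ h)
  · exact Or.inl (key _ _ h)

lemma chain_Nk : IsChain (· ⊆ ·) {s | ∃ k : ℕ, s = Nk k} := by
  rintro s ⟨k, rfl⟩ t ⟨k', rfl⟩ -
  have key : ∀ a b : ℕ, a ≤ b → Nk b ⊆ Nk a := by
    rintro a b hab p ⟨h1, h2⟩
    exact ⟨h1, le_trans hab h2⟩
  rcases le_total k k' with h | h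
  · exact Or.inr (key _ _ h)
  · exact Or.inl (key _ _ h)

lemma inter_Nk : ⋂₀ {s | ∃ k : ℕ, s = Nk k} = ∅ := by
  ext p
  simp only [Set.mem_sInter, Set.mem_setOf_eq, Set.mem_empty_iff_false, iff_false]
  intro h
  have := (h _ ⟨p.2 + 1, rfl⟩).2
  omega

theorem no_cic_expansion_sphericallyComplete :
    ∀ B' : Set (Set (ℕ∞ × ℕ)), Tfam ⊆ B' →
      (∀ C ⊆ B', C.Nonempty → IsChain (· ⊆ ·) C → ⋂₀ C = ∅ ∨ ⋂₀ C ∈ B') →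
      (∀ k : ℕ, ⋂₀ {s | ∃ m : ℕ, s = Bmk m k} = Nk k ∧ Nk k ∈ B') ∧
      IsChain (· ⊆ ·) {s | ∃ k : ℕ, s = Nk k} ∧
      ⋂₀ {s | ∃ k : ℕ, s = Nk k} = ∅ ∧
      ¬(∀ C ⊆ B', C.Nonempty → IsChain (· ⊆ ·) C → (⋂₀ C).Nonempty) := by
  intro B' hTB hcic
  have hNkB' : ∀ k : ℕ, Nk k ∈ B' := by
    intro k
    have hsub : {s | ∃ m : ℕ, s = Bmk m k} ⊆ B' := by
      rintro s ⟨m, rfl⟩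
      exact hTB (Or.inl (Or.inl ⟨m, k, rfl⟩))
    have := hcic _ hsub ⟨Bmk 0 k, 0, rfl⟩ (chain_Bmk k)
    rw [inter_Bmk] at this
    rcases this with h | h
    · exfalso
      have : ((⊤ : ℕ∞), k) ∈ Nk k := ⟨rfl, le_refl _⟩
      rw [h] at this
      exact this
    · exact h
  refine ⟨fun k => ⟨inter_Bmk k, hNkB' k⟩, chain_Nk, inter_Nk, ?_⟩
  intro hsc
  have hsub : {s | ∃ k : ℕ, s = Nk k} ⊆ B' := by
    rintro s ⟨k, rfl⟩; exact hNkB' k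
  have := hsc _ hsub ⟨Nk 0, 0, rfl⟩ chain_Nk
  rw [inter_Nk] at this
  exact Set.not_nonempty_empty this
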